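/- Every generalized flag F in a countable-dimensional complex vector space V admits a compatible basis: there exist a basis E of V and a surjective map σ from E onto the linearly ordered set A indexing the pairs of consecutive members of F, such that for each α ∈ A, F'_α is the span of {e ∈ E : σ(e) ≺ α} and F''_α is the span of {e ∈ E : σ(e) ⪯ α}. -/

import Mathlib

open Submodule

variable {V : Type*} [AddCommGroup V] [Module ℂ V]

/-- `F''` is the immediate successor of `F'` in the chain `𝓕`. -/
def ConsecPair (𝓕 : Set (Submodule ℂ V)) (F' F'' : Submodule ℂ V) : Prop :=
  F' ∈ 𝓕 ∧ F'' ∈ 𝓕 ∧ F' < F'' ∧ ∀ G ∈ 𝓕, ¬ (F' < G ∧ G < F'')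

/-- A generalized flag. -/
structure IsGenFlag (𝓕 : Set (Submodule ℂ V)) : Prop where
  chain : IsChain (· ≤ ·) 𝓕
  predsucc : ∀ F ∈ 𝓕, (∃ G, ConsecPair 𝓕 G F) ∨ (∃ G, ConsecPair 𝓕 F G)
  cover : ∀ v : V, v ≠ 0 → ∃ F' F'', ConsecPair 𝓕 F' F'' ∧ v ∈ F'' ∧ v ∉ F'

namespace GenFlagAux

abbrev GPair (𝓕 : Set (Submodule ℂ V)) : Type _ :=
  {p : Submodule ℂ V × Submodule ℂ V // ConsecPair 𝓕 p.1 p.2}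

variable {𝓕 : Set (Submodule ℂ V)}

/-- trichotomy for consecutive pairs -/
theorem gpair_tri (h𝓕 : IsGenFlag 𝓕) (p q : GPair 𝓕) :
    p.1.2 ≤ q.1.1 ∨ p = q ∨ q.1.2 ≤ p.1.1 := by
  obtain ⟨⟨a, b⟩, ha, hb, hab, hcons⟩ := p
  obtain ⟨⟨c, d⟩, hc, hd, hcd, hcons'⟩ := q
  simp only at *
  -- claim: if b ≤ d and ¬ b ≤ c then pairs are equal
  have key : ∀ (a b c d : Submodule ℂ V), a ∈ 𝓕 → b ∈ 𝓕 → a < b →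
      (∀ G ∈ 𝓕, ¬ (a < G ∧ G < b)) → c ∈ 𝓕 → d ∈ 𝓕 → c < d →
      (∀ G ∈ 𝓕, ¬ (c < G ∧ G < d)) → b ≤ d → ¬ b ≤ c → a = c ∧ b = d := by
    intro a b c d ha hb hab hcons hc hd hcd hcons' hbd hbc
    have hcb : c < b := by
      rcases h𝓕.chain.total hc hb with h | h
      · exact lt_of_le_of_ne h (fun he => hbc he.ge)
      · exact absurd h hbc
    have hbd' : b = d := by
      by_contra hne
      exact hcons' b hb ⟨hcb, lt_of_le_of_ne hbd hne⟩
    constructor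
    · by_contra hne
      rcases h𝓕.chain.total ha hc with h | h
      · exact hcons c hc ⟨lt_of_le_of_ne h hne, hcb⟩
      · exact hcons' a ha ⟨lt_of_le_of_ne h (fun he => hne he.symm), hbd' ▸ hab⟩
    · exact hbd'
  by_cases hbc : b ≤ c
  · exact Or.inl hbc
  by_cases hdb : d ≤ a
  · exact Or.inr (Or.inr hdb)
  rcases h𝓕.chain.total hb hd with h | h
  · obtain ⟨h1, h2⟩ := key a b c d ha hb hab hcons hc hd hcd hcons' h hbc
    exact Or.inr (Or.inl (by simp [h1, h2]))
  · obtain ⟨h1, h2⟩ := key c d a b hc hd hcd hcons' ha hb hab hcons h hdb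
    exact Or.inr (Or.inl (by simp [h1, h2]))

open Classical in
noncomputable def deg (𝓕 : Set (Submodule ℂ V)) [Nonempty (GPair 𝓕)] (v : V) : GPair 𝓕 :=
  if h : ∃ p : GPair 𝓕, v ∈ p.1.2 ∧ v ∉ p.1.1 then h.choose else Classical.arbitrary _

variable [Nonempty (GPair 𝓕)]

theorem deg_spec (h𝓕 : IsGenFlag 𝓕) {v : V} (hv : v ≠ 0) :
    v ∈ (deg 𝓕 v).1.2 ∧ v ∉ (deg 𝓕 v).1.1 := by
  obtain ⟨F', F'', hc, hm, hn⟩ := h𝓕.cover v hv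
  have h : ∃ p : GPair 𝓕, v ∈ p.1.2 ∧ v ∉ p.1.1 := ⟨⟨(F', F''), hc⟩, hm, hn⟩
  rw [deg, dif_pos h]
  exact h.choose_spec

theorem deg_mem (h𝓕 : IsGenFlag 𝓕) {v : V} (hv : v ≠ 0) : v ∈ (deg 𝓕 v).1.2 :=
  (deg_spec h𝓕 hv).1

theorem deg_not_mem (h𝓕 : IsGenFlag 𝓕) {v : V} (hv : v ≠ 0) : v ∉ (deg 𝓕 v).1.1 :=
  (deg_spec h𝓕 hv).2

/-- if `v ∈ F''_p` then `F''_{deg v} ≤ F''_p`. -/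
theorem deg_le_snd (h𝓕 : IsGenFlag 𝓕) {v : V} (hv : v ≠ 0) {p : GPair 𝓕}
    (h : v ∈ p.1.2) : (deg 𝓕 v).1.2 ≤ p.1.2 := by
  rcases gpair_tri h𝓕 (deg 𝓕 v) p with h1 | h1 | h1
  · exact h1.trans p.2.2.2.1.le
  · rw [h1]
  · exact absurd (h1 h) (deg_not_mem h𝓕 hv)

/-- if `v ∈ F'_p` then `F''_{deg v} ≤ F'_p`. -/
theorem deg_le_fst (h𝓕 : IsGenFlag 𝓕) {v : V} (hv : v ≠ 0) {p : GPair 𝓕}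
    (h : v ∈ p.1.1) : (deg 𝓕 v).1.2 ≤ p.1.1 := by
  rcases gpair_tri h𝓕 (deg 𝓕 v) p with h1 | h1 | h1
  · exact h1
  · exact absurd (h1 ▸ h) (deg_not_mem h𝓕 hv)
  · exact absurd (h1 (p.2.2.2.1.le h)) (deg_not_mem h𝓕 hv)



/-- the set `S` is in "good position" w.r.t. the flag. -/
def Good (𝓕 : Set (Submodule ℂ V)) [Nonempty (GPair 𝓕)] (S : Finset V) : Prop :=
  (0 : V) ∉ S ∧ ∀ c : V → ℂ, ∀ e ∈ S, c e ≠ 0 → ∑ x ∈ S, c x • x ∉ (deg 𝓕 e).1.1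

theorem good_empty : Good 𝓕 (∅ : Finset V) := by
  refine ⟨by simp, by simp⟩

theorem good_mono {S T : Finset V} (hTS : T ⊆ S) (hS : Good 𝓕 S) : Good 𝓕 T := by
  classical
  refine ⟨fun h => hS.1 (hTS h), fun c e he hce hmem => ?_⟩
  have : ∑ x ∈ S, (if x ∈ T then c x else 0) • x = ∑ x ∈ T, c x • x := by
    rw [← Finset.sum_subset hTS (fun x _ hx => by simp [hx])]
    exact Finset.sum_congr rfl fun x hx => by simp [hx]
  exact hS.2 _ e (hTS he) (by simp [he, hce]) (this ▸ hmem)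

theorem exists_max (h𝓕 : IsGenFlag 𝓕) (s : Finset (GPair 𝓕)) (hs : s.Nonempty) :
    ∃ m ∈ s, ∀ p ∈ s, p.1.2 ≤ m.1.2 := by
  classical
  induction s using Finset.induction_on with
  | empty => exact absurd hs (by simp)
  | @insert a s ha ih =>
    rcases s.eq_empty_or_nonempty with rfl | hs'
    · exact ⟨a, by simp, by simp⟩
    · obtain ⟨m, hm, hmax⟩ := ih hs'
      rcases h𝓕.chain.total a.2.2.1 m.2.2.1 with h | h
      · exact ⟨m, Finset.mem_insert_of_mem hm, fun p hp => by
          rcases Finset.mem_insert.1 hp with rfl | hp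
          · exact h
          · exact hmax p hp⟩
      · exact ⟨a, Finset.mem_insert_self a s, fun p hp => by
          rcases Finset.mem_insert.1 hp with rfl | hp
          · exact le_rfl
          · exact (hmax p hp).trans h⟩

open Classical in
theorem good_insert (h𝓕 : IsGenFlag 𝓕) {S : Finset V} (hS : Good 𝓕 S) {w : V} (hw0 : w ≠ 0)
    (hw : w ∉ (deg 𝓕 w).1.1 ⊔ span ℂ {x : V | x ∈ S ∧ deg 𝓕 x = deg 𝓕 w}) :
    Good 𝓕 (insert w S) := by
  classical
  rw [show {x : V | x ∈ S ∧ deg 𝓕 x = deg 𝓕 w}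
      = ((S.filter (fun e => deg 𝓕 e = deg 𝓕 w)) : Set V) by
    simp [Finset.coe_filter]] at hw
  have hwS : w ∉ S := fun h =>
    hw (Submodule.mem_sup_right (subset_span (by simp [h])))
  refine ⟨by simp [hw0.symm, hS.1, Ne.symm hw0], fun c e he hce hmem => ?_⟩
  have hne0 : ∀ x ∈ insert w S, x ≠ 0 := by
    intro x hx h0
    rcases Finset.mem_insert.1 hx with rfl | hx
    · exact hw0 h0
    · exact hS.1 (h0 ▸ hx)
  by_cases hcw : c w = 0
  · have he' : e ∈ S := by
      rcases Finset.mem_insert.1 he with rfl | h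
      · exact absurd hcw hce
      · exact h
    apply hS.2 c e he' hce
    rwa [Finset.sum_insert hwS, hcw, zero_smul, zero_add] at hmem
  -- c w ≠ 0 : use a maximal degree
  set T := (insert w S).filter (fun x => c x ≠ 0) with hT
  have hwT : w ∈ T := Finset.mem_filter.2 ⟨Finset.mem_insert_self _ _, hcw⟩
  obtain ⟨m, hm, hmax0⟩ := exists_max h𝓕 (T.image (fun x => deg 𝓕 x))
    ⟨deg 𝓕 w, Finset.mem_image_of_mem _ hwT⟩
  obtain ⟨x₀, hx₀T, hx₀⟩ := Finset.mem_image.1 hm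
  have hmax : ∀ x ∈ T, (deg 𝓕 x).1.2 ≤ m.1.2 := fun x hx =>
    hmax0 _ (Finset.mem_image_of_mem _ hx)
  have heT : e ∈ T := Finset.mem_filter.2 ⟨he, hce⟩
  -- full sum lies in m.1.1
  have hu : (∑ x ∈ insert w S, c x • x) ∈ m.1.1 := by
    rcases gpair_tri h𝓕 (deg 𝓕 e) m with h1 | h1 | h1
    · exact h1 ((deg 𝓕 e).2.2.2.1.le hmem)
    · exact h1 ▸ hmem
    · rcases eq_or_ne (deg 𝓕 e) m with h2 | h2
      · exact h2 ▸ hmem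
      · exact absurd ((hmax e heT).trans h1) (fun h => absurd ((deg 𝓕 e).2.2.2.1.trans_le h)
          (lt_irrefl _))
  -- the part of the sum of maximal degree lies in m.1.1
  have hrest : ∑ x ∈ (insert w S).filter (fun x => ¬ deg 𝓕 x = m), c x • x ∈ m.1.1 := by
    refine Submodule.sum_mem _ fun x hx => ?_
    rcases Finset.mem_filter.1 hx with ⟨hx1, hx2⟩
    by_cases hcx : c x = 0
    · simp [hcx]
    · have hxT : x ∈ T := by simp [hT, hx1, hcx]
      rcases gpair_tri h𝓕 (deg 𝓕 x) m with h1 | h1 | h1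
      · exact Submodule.smul_mem _ _ (h1 (deg_mem h𝓕 (hne0 x hx1)))
      · exact absurd h1 hx2
      · exact absurd ((hmax x hxT).trans h1) (fun h => absurd ((deg 𝓕 x).2.2.2.1.trans_le h)
          (lt_irrefl _))
  have hz : ∑ x ∈ (insert w S).filter (fun x => deg 𝓕 x = m), c x • x ∈ m.1.1 := by
    have := Finset.sum_filter_add_sum_filter_not (insert w S) (fun x => deg 𝓕 x = m)
      (fun x => c x • x)
    have heq : ∑ x ∈ (insert w S).filter (fun x => deg 𝓕 x = m), c x • x
        = (∑ x ∈ insert w S, c x • x)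
          - ∑ x ∈ (insert w S).filter (fun x => ¬ deg 𝓕 x = m), c x • x := by
      rw [← this]; abel
    rw [heq]
    exact Submodule.sub_mem _ hu hrest
  by_cases hwm : deg 𝓕 w = m
  · subst hwm
    apply hw
    rw [Finset.filter_insert, if_pos rfl, Finset.sum_insert (by simp [hwS])] at hz
    have h1 : c w • w ∈ (deg 𝓕 w).1.1 ⊔ span ℂ
        ((S.filter (fun e => deg 𝓕 e = deg 𝓕 w)) : Set V) := by
      have : c w • w = (c w • w + ∑ x ∈ S.filter (fun x => deg 𝓕 x = deg 𝓕 w), c x • x)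
          - ∑ x ∈ S.filter (fun x => deg 𝓕 x = deg 𝓕 w), c x • x := by abel
      rw [this]
      refine Submodule.sub_mem _ (Submodule.mem_sup_left hz)
        (Submodule.mem_sup_right (Submodule.sum_mem _ fun x hx =>
          Submodule.smul_mem _ _ (subset_span (by simpa using hx))))
    have := Submodule.smul_mem _ (c w)⁻¹ h1
    rwa [inv_smul_smul₀ hcw] at this
  · -- the maximal degree is attained in S; contradict goodness of S
    have hx₀w : x₀ ≠ w := fun h => hwm (h ▸ hx₀)
    have hx₀S : x₀ ∈ S := by
      rcases Finset.mem_insert.1 (Finset.mem_filter.1 hx₀T).1 with h | h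
      · exact absurd h hx₀w
      · exact h
    have hcx₀ : c x₀ ≠ 0 := (Finset.mem_filter.1 hx₀T).2
    rw [Finset.filter_insert, if_neg hwm] at hz
    have hz' : ∑ x ∈ S, (if deg 𝓕 x = m then c x else 0) • x ∈ m.1.1 := by
      have : ∑ x ∈ S, (if deg 𝓕 x = m then c x else 0) • x
          = ∑ x ∈ S.filter (fun x => deg 𝓕 x = m), c x • x := by
        rw [Finset.sum_filter]
        exact Finset.sum_congr rfl fun x _ => by split <;> simp
      exact this ▸ hz
    exact hS.2 _ x₀ hx₀S (by simp [hx₀, hcx₀]) (hx₀ ▸ hz')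

open Classical in
theorem main_step (h𝓕 : IsGenFlag 𝓕) {S : Finset V} (hS : Good 𝓕 S) (w : V) :
    (∃ S' : Finset V, S ⊆ S' ∧ Good 𝓕 S' ∧
      span ℂ (S' : Set V) = span ℂ (insert w (S : Set V))) ∨
    (∃ u : V, (Finset.filter (fun e => (deg 𝓕 e).1.2 ≤ (deg 𝓕 u).1.2) S).card
        < (Finset.filter (fun e => (deg 𝓕 e).1.2 ≤ (deg 𝓕 w).1.2) S).card ∧
      span ℂ (insert u (S : Set V)) = span ℂ (insert w (S : Set V))) := by
  classical
  by_cases hws : w ∈ span ℂ (S : Set V)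
  · exact Or.inl ⟨S, subset_rfl, hS, (span_insert_eq_span hws).symm⟩
  have hw0 : w ≠ 0 := fun h => hws (h ▸ zero_mem _)
  by_cases hcond : w ∈ (deg 𝓕 w).1.1 ⊔ span ℂ {x : V | x ∈ S ∧ deg 𝓕 x = deg 𝓕 w}
  · -- reduction step
    have hex : ∃ e ∈ S, deg 𝓕 e = deg 𝓕 w := by
      by_contra hne
      push_neg at hne
      have hempty : {x : V | x ∈ S ∧ deg 𝓕 x = deg 𝓕 w} = ∅ := by
        ext x; simpa using fun hx => hne x hx
      rw [hempty, span_empty, sup_bot_eq] at hcond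
      exact deg_not_mem h𝓕 hw0 hcond
    obtain ⟨e₀, he₀, hde₀⟩ := hex
    obtain ⟨u, hu, z, hz, huz⟩ := Submodule.mem_sup.1 hcond
    have hzS : z ∈ span ℂ (S : Set V) :=
      span_mono (fun x hx => hx.1) hz
    have huspan : u ∉ span ℂ (S : Set V) := fun h =>
      hws (by rw [← huz]; exact add_mem h hzS)
    have hu0 : u ≠ 0 := fun h => huspan (h ▸ zero_mem _)
    have hdu : (deg 𝓕 u).1.2 ≤ (deg 𝓕 w).1.1 := deg_le_fst h𝓕 hu0 hu
    refine Or.inr ⟨u, ?_, ?_⟩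
    · refine Finset.card_lt_card ⟨fun e he => by
        rw [Finset.mem_filter] at he ⊢
        exact ⟨he.1, he.2.trans (hdu.trans (deg 𝓕 w).2.2.2.1.le)⟩, fun hsub => ?_⟩
      have he₀mem : e₀ ∈ Finset.filter
          (fun e => (deg 𝓕 e).1.2 ≤ (deg 𝓕 w).1.2) S :=
        Finset.mem_filter.2 ⟨he₀, by rw [hde₀]⟩
      have := (Finset.mem_filter.1 (hsub he₀mem)).2
      rw [hde₀] at this
      exact absurd ((this.trans hdu).trans_lt (deg 𝓕 w).2.2.2.1) (lt_irrefl _)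
    · -- spans agree
      have h2 : u ∈ span ℂ (insert w (S : Set V)) := by
        have : u = w - z := by rw [← huz]; abel
        rw [this]
        exact sub_mem (subset_span (Set.mem_insert _ _))
          (span_mono (Set.subset_insert _ _) hzS)
      have h1 : w ∈ span ℂ (insert u (S : Set V)) := by
        rw [← huz]
        exact add_mem (subset_span (Set.mem_insert _ _))
          (span_mono (Set.subset_insert _ _) hzS)
      refine le_antisymm (span_le.2 (Set.insert_subset_iff.2
          ⟨h2, fun x hx => subset_span (Set.mem_insert_of_mem _ hx)⟩))
        (span_le.2 (Set.insert_subset_iff.2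
          ⟨h1, fun x hx => subset_span (Set.mem_insert_of_mem _ hx)⟩))
  · -- can insert w directly
    exact Or.inl ⟨insert w S, Finset.subset_insert _ _, good_insert h𝓕 hS hw0 hcond,
      by rw [Finset.coe_insert]⟩


theorem good_le_fst (h𝓕 : IsGenFlag 𝓕) {S : Finset V} (hS : Good 𝓕 S) {c : V → ℂ}
    {p : GPair 𝓕} (hsum : ∑ x ∈ S, c x • x ∈ p.1.1) {e : V} (he : e ∈ S) (hce : c e ≠ 0) :
    (deg 𝓕 e).1.2 ≤ p.1.1 := by
  have hnot := hS.2 c e he hce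
  rcases gpair_tri h𝓕 (deg 𝓕 e) p with h1 | h1 | h1
  · exact h1
  · exact absurd (h1 ▸ hsum) hnot
  · exact absurd (h1 (p.2.2.2.1.le hsum)) hnot

theorem good_le_snd (h𝓕 : IsGenFlag 𝓕) {S : Finset V} (hS : Good 𝓕 S) {c : V → ℂ}
    {p : GPair 𝓕} (hsum : ∑ x ∈ S, c x • x ∈ p.1.2) {e : V} (he : e ∈ S) (hce : c e ≠ 0) :
    (deg 𝓕 e).1.2 ≤ p.1.2 := by
  have hnot := hS.2 c e he hce
  rcases gpair_tri h𝓕 (deg 𝓕 e) p with h1 | h1 | h1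
  · exact h1.trans p.2.2.2.1.le
  · exact (congrArg (fun q : GPair 𝓕 => q.1.2) h1).le
  · exact absurd (h1 hsum) hnot

open Classical in
theorem exists_extension_aux (h𝓕 : IsGenFlag 𝓕) {S : Finset V} (hS : Good 𝓕 S) :
    ∀ n : ℕ, ∀ w : V,
      (Finset.filter (fun e => (deg 𝓕 e).1.2 ≤ (deg 𝓕 w).1.2) S).card ≤ n →
      ∃ S' : Finset V, S ⊆ S' ∧ Good 𝓕 S' ∧
        span ℂ (S' : Set V) = span ℂ (insert w (S : Set V)) := by
  classical
  intro n
  induction n with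
  | zero =>
    intro w hcard
    exact (main_step h𝓕 hS w).elim (fun h => h) (fun h => by
      obtain ⟨u, hlt, -⟩ := h
      exact absurd (hlt.trans_le hcard) (Nat.not_lt_zero _))
  | succ n ih =>
    intro w hcard
    refine (main_step h𝓕 hS w).elim (fun h => h) (fun h => ?_)
    obtain ⟨u, hlt, hspan⟩ := h
    obtain ⟨S', hsub, hgood, hspan'⟩ := ih u (Nat.lt_succ_iff.1 (hlt.trans_le hcard))
    exact ⟨S', hsub, hgood, by rw [hspan', hspan]⟩

theorem exists_extension (h𝓕 : IsGenFlag 𝓕) {S : Finset V} (hS : Good 𝓕 S) (w : V) :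
    ∃ S' : Finset V, S ⊆ S' ∧ Good 𝓕 S' ∧
      span ℂ (S' : Set V) = span ℂ (insert w (S : Set V)) := by
  classical
  exact exists_extension_aux h𝓕 hS _ w le_rfl

noncomputable def chainS (h𝓕 : IsGenFlag 𝓕) [Nonempty (GPair 𝓕)] (v : ℕ → V) :
    ℕ → {S : Finset V // Good 𝓕 S}
  | 0 => ⟨∅, good_empty⟩
  | n + 1 =>
    ⟨(exists_extension h𝓕 (chainS h𝓕 v n).2 (v n)).choose,
     (exists_extension h𝓕 (chainS h𝓕 v n).2 (v n)).choose_spec.2.1⟩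

theorem chainS_subset (h𝓕 : IsGenFlag 𝓕) (v : ℕ → V) (n : ℕ) :
    (chainS h𝓕 v n).1 ⊆ (chainS h𝓕 v (n + 1)).1 :=
  (exists_extension h𝓕 (chainS h𝓕 v n).2 (v n)).choose_spec.1

theorem chainS_span (h𝓕 : IsGenFlag 𝓕) (v : ℕ → V) (n : ℕ) :
    span ℂ ((chainS h𝓕 v (n + 1)).1 : Set V)
      = span ℂ (insert (v n) ((chainS h𝓕 v n).1 : Set V)) :=
  (exists_extension h𝓕 (chainS h𝓕 v n).2 (v n)).choose_spec.2.2

theorem chainS_mono (h𝓕 : IsGenFlag 𝓕) (v : ℕ → V) : ∀ {m n : ℕ}, m ≤ n →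
    (chainS h𝓕 v m).1 ⊆ (chainS h𝓕 v n).1 := by
  intro m n h
  induction n with
  | zero => rw [Nat.le_zero.1 h]
  | succ n ih =>
    rcases Nat.le_succ_iff.1 h with h' | h'
    · exact (ih h').trans (chainS_subset h𝓕 v n)
    · rw [h']

theorem good_linearIndependent (h𝓕 : IsGenFlag 𝓕) {S : Finset V} (hS : Good 𝓕 S) :
    LinearIndependent ℂ (fun x : (S : Set V) => (x : V)) := by
  classical
  rw [linearIndependent_subtype_iff, linearIndepOn_iff]
  intro l hl hsum
  by_contra hne
  obtain ⟨x, hx⟩ := Finsupp.support_nonempty_iff.2 hne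
  have hsub : l.support ⊆ S := by exact_mod_cast (Finsupp.mem_supported ℂ l).1 hl
  apply hS.2 l x (hsub hx) (Finsupp.mem_support_iff.1 hx)
  have hz : ∑ y ∈ S, l y • y = 0 := by
    rw [← hsum, Finsupp.linearCombination_apply, Finsupp.sum]
    exact (Finset.sum_subset hsub (fun y _ hy => by
      simp [Finsupp.notMem_support_iff.1 hy])).symm
  rw [hz]
  exact zero_mem _

theorem good_mem_span_fst (h𝓕 : IsGenFlag 𝓕) {S : Finset V} (hS : Good 𝓕 S)
    {p : GPair 𝓕} {c : V → ℂ} (h : ∑ x ∈ S, c x • x ∈ p.1.1) :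
    ∑ x ∈ S, c x • x ∈ span ℂ {x : V | x ∈ S ∧ (deg 𝓕 x).1.2 ≤ p.1.1} := by
  refine Submodule.sum_mem _ fun x hx => ?_
  by_cases hcx : c x = 0
  · simp [hcx]
  · exact Submodule.smul_mem _ _ (subset_span ⟨hx, good_le_fst h𝓕 hS h hx hcx⟩)

theorem good_mem_span_snd (h𝓕 : IsGenFlag 𝓕) {S : Finset V} (hS : Good 𝓕 S)
    {p : GPair 𝓕} {c : V → ℂ} (h : ∑ x ∈ S, c x • x ∈ p.1.2) :
    ∑ x ∈ S, c x • x ∈ span ℂ {x : V | x ∈ S ∧ (deg 𝓕 x).1.2 ≤ p.1.2} := by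
  refine Submodule.sum_mem _ fun x hx => ?_
  by_cases hcx : c x = 0
  · simp [hcx]
  · exact Submodule.smul_mem _ _ (subset_span ⟨hx, good_le_snd h𝓕 hS h hx hcx⟩)

end GenFlagAux

open GenFlagAux in
/-- Every generalized flag in a countable-dimensional complex vector space admits a
compatible basis: there is a basis `E` and a surjection `σ` from the index set of `E`
onto the set `A` of pairs of consecutive members such that for each pair `α = (F'_α, F''_α)`,
`F'_α` is the span of the basis vectors with `σ(e) ≺ α` (i.e. `F''_{σ(e)} ≤ F'_α`) and
`F''_α` is the span of the basis vectors with `σ(e) ⪯ α` (i.e. `F''_{σ(e)} ≤ F''_α`). -/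
theorem exists_compatible_basis
    (hV : Module.rank ℂ V = Cardinal.aleph0)
    (𝓕 : Set (Submodule ℂ V)) (h𝓕 : IsGenFlag 𝓕) :
    ∃ (ι : Type) (E : Module.Basis ι ℂ V)
      (σ : ι → {p : Submodule ℂ V × Submodule ℂ V // ConsecPair 𝓕 p.1 p.2}),
      Function.Surjective σ ∧
      ∀ p : {p : Submodule ℂ V × Submodule ℂ V // ConsecPair 𝓕 p.1 p.2},
        p.val.1 = Submodule.span ℂ ((⇑E) '' {i | (σ i).val.2 ≤ p.val.1}) ∧
        p.val.2 = Submodule.span ℂ ((⇑E) '' {i | (σ i).val.2 ≤ p.val.2}) := by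
  classical
  obtain ⟨v0, hv0⟩ : ∃ x : V, x ≠ 0 :=
    rank_pos_iff_exists_ne_zero.1 (by rw [hV]; exact Cardinal.aleph0_pos)
  haveI hne : Nonempty (GPair 𝓕) := by
    obtain ⟨F', F'', hc, -, -⟩ := h𝓕.cover v0 hv0
    exact ⟨⟨(F', F''), hc⟩⟩
  -- a basis of `V` indexed by `ℕ`
  let b := Module.Basis.ofVectorSpace ℂ V
  have hmk : Cardinal.mk (Module.Basis.ofVectorSpaceIndex ℂ V) = Cardinal.aleph0 := by
    rw [b.mk_eq_rank'', hV]
  haveI : Countable (Module.Basis.ofVectorSpaceIndex ℂ V) := Cardinal.mk_le_aleph0_iff.1 hmk.le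
  haveI : Infinite (Module.Basis.ofVectorSpaceIndex ℂ V) := Cardinal.aleph0_le_mk_iff.1 hmk.ge
  obtain ⟨eqv⟩ : Nonempty ((Module.Basis.ofVectorSpaceIndex ℂ V) ≃ ℕ) := nonempty_equiv_of_countable
  let v : ℕ → V := fun n => b (eqv.symm n)
  have hvspan : span ℂ (Set.range v) = ⊤ := by
    have hr : Set.range v = Set.range ⇑b := by
      ext x
      exact ⟨fun ⟨n, hn⟩ => ⟨eqv.symm n, hn⟩, fun ⟨i, hi⟩ => ⟨eqv i, by simpa [v] using hi⟩⟩
    rw [hr, b.span_eq]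
  -- the good chain of finite sets
  let g : ℕ → Finset V := fun n => (chainS h𝓕 v n).1
  have hg : ∀ n, Good 𝓕 (g n) := fun n => (chainS h𝓕 v n).2
  have hgmono : ∀ {m n : ℕ}, m ≤ n → g m ⊆ g n := fun h => chainS_mono h𝓕 v h
  let E : Set V := ⋃ n, (g n : Set V)
  have hEspan : span ℂ E = ⊤ := by
    refine le_antisymm le_top ?_
    rw [← hvspan]
    refine span_le.2 ?_
    rintro x ⟨n, rfl⟩
    have h1 : v n ∈ span ℂ ((g (n + 1) : Finset V) : Set V) := by
      rw [chainS_span h𝓕 v n]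
      exact subset_span (Set.mem_insert _ _)
    exact span_mono (Set.subset_iUnion (fun n => ((g n : Finset V) : Set V)) (n + 1)) h1
  have hdir : Directed (· ⊆ ·) (fun n => ((g n : Finset V) : Set V)) := fun m n =>
    ⟨max m n, fun x hx => Finset.coe_subset.2 (hgmono (le_max_left m n)) hx,
      fun x hx => Finset.coe_subset.2 (hgmono (le_max_right m n)) hx⟩
  have hli : LinearIndependent ℂ (fun x : E => (x : V)) :=
    linearIndepOn_iUnion_of_directed (R := ℂ) (v := id) hdir
      (fun n => good_linearIndependent h𝓕 (hg n))
  let B : Module.Basis E ℂ V := Module.Basis.mk hli (by rw [Subtype.range_coe]; exact hEspan.ge)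
  haveI : Countable E := (Set.countable_iUnion (fun n => (g n).countable_toSet)).to_subtype
  haveI : Infinite E := by
    rw [Set.infinite_coe_iff]
    intro hfin
    have h2 := rank_span_le (R := ℂ) E
    rw [hEspan, rank_top] at h2
    rw [hV] at h2
    exact absurd (h2.trans_lt hfin.lt_aleph0) (lt_irrefl _)
  obtain ⟨eqvE⟩ : Nonempty (E ≃ ℕ) := nonempty_equiv_of_countable
  let Bb : Module.Basis ℕ ℂ V := B.reindex eqvE
  have hBb : ∀ i, Bb i = ((eqvE.symm i : E) : V) := fun i => by
    rw [Module.Basis.reindex_apply, Module.Basis.mk_apply]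
  have hBbne : ∀ i, Bb i ≠ 0 := fun i => Bb.ne_zero i
  have hBbE : ∀ i, Bb i ∈ E := fun i => by rw [hBb]; exact (eqvE.symm i).2
  let σ : ℕ → GPair 𝓕 := fun i => deg 𝓕 (Bb i)
  have hinj : Function.Injective ⇑Bb := Bb.injective
  have hrepr : ∀ w : V, ∑ i ∈ (Bb.repr w).support, (Bb.repr w) i • Bb i = w := fun w => by
    conv_rhs => rw [← Bb.linearCombination_repr w]
    rw [Finsupp.linearCombination_apply, Finsupp.sum]
  have hfinsub : ∀ t : Finset V, ↑t ⊆ E → ∃ N, (t : Set V) ⊆ ↑(g N) := by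
    intro t
    induction t using Finset.induction_on with
    | empty => exact fun _ => ⟨0, by simp⟩
    | @insert a t ha ih =>
      intro hins
      rw [Finset.coe_insert, Set.insert_subset_iff] at hins
      obtain ⟨N₁, hN₁⟩ := ih hins.2
      obtain ⟨N₂, hN₂⟩ := Set.mem_iUnion.1 hins.1
      refine ⟨max N₁ N₂, ?_⟩
      rw [Finset.coe_insert, Set.insert_subset_iff]
      exact ⟨Finset.coe_subset.2 (hgmono (le_max_right N₁ N₂)) hN₂,
        hN₁.trans (Finset.coe_subset.2 (hgmono (le_max_left N₁ N₂)))⟩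
  have hkey : ∀ (w : V) (p : GPair 𝓕),
      (w ∈ p.1.1 → w ∈ span ℂ (⇑Bb '' {i | (σ i).1.2 ≤ p.1.1})) ∧
      (w ∈ p.1.2 → w ∈ span ℂ (⇑Bb '' {i | (σ i).1.2 ≤ p.1.2})) := by
    intro w p
    set l := Bb.repr w with hldef
    set T := l.support.image (fun i => Bb i) with hT
    have hTE : ↑T ⊆ E := by
      intro x hx
      obtain ⟨i, -, rfl⟩ := Finset.mem_image.1 (by exact_mod_cast hx)
      exact hBbE i
    obtain ⟨N, hN⟩ := hfinsub T hTE
    have hTgood : Good 𝓕 T := good_mono (Finset.coe_subset.1 hN) (hg N)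
    set c : V → ℂ := fun x => l (Function.invFun ⇑Bb x) with hcdef
    have hcBb : ∀ i, c (Bb i) = l i := fun i => by
      rw [hcdef]
      simp only []
      rw [Function.leftInverse_invFun hinj]
    have hsumT : ∑ x ∈ T, c x • x = w := by
      rw [hT, Finset.sum_image (fun i _ j _ h => hinj h)]
      conv_rhs => rw [← hrepr w]
      exact Finset.sum_congr rfl fun i _ => by rw [hcBb]
    constructor
    · intro hw
      have h1 := good_mem_span_fst h𝓕 hTgood (p := p) (c := c) (by rw [hsumT]; exact hw)
      rw [hsumT] at h1
      refine span_mono ?_ h1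
      rintro x ⟨hxT, hxle⟩
      obtain ⟨i, -, rfl⟩ := Finset.mem_image.1 hxT
      exact ⟨i, hxle, rfl⟩
    · intro hw
      have h1 := good_mem_span_snd h𝓕 hTgood (p := p) (c := c) (by rw [hsumT]; exact hw)
      rw [hsumT] at h1
      refine span_mono ?_ h1
      rintro x ⟨hxT, hxle⟩
      obtain ⟨i, -, rfl⟩ := Finset.mem_image.1 hxT
      exact ⟨i, hxle, rfl⟩
  refine ⟨ℕ, Bb, σ, ?_, ?_⟩
  · -- surjectivity
    intro p
    by_contra hns
    push_neg at hns
    obtain ⟨w, hw2, hw1⟩ := SetLike.exists_of_lt p.2.2.2.1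
    have h2 := (hkey w p).2 hw2
    have h3 : span ℂ (⇑Bb '' {i | (σ i).1.2 ≤ p.1.2}) ≤ p.1.1 := by
      refine span_le.2 ?_
      rintro x ⟨i, hi, rfl⟩
      rcases gpair_tri h𝓕 (σ i) p with ht | ht | ht
      · exact ht (deg_mem h𝓕 (hBbne i))
      · exact absurd ht (hns i)
      · exact absurd ((hi.trans ht).trans_lt (σ i).2.2.2.1) (lt_irrefl _)
    exact hw1 (h3 h2)
  · intro p
    constructor
    · refine le_antisymm (fun w hw => (hkey w p).1 hw) (span_le.2 ?_)
      rintro x ⟨i, hi, rfl⟩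
      exact hi (deg_mem h𝓕 (hBbne i))
    · refine le_antisymm (fun w hw => (hkey w p).2 hw) (span_le.2 ?_)
      rintro x ⟨i, hi, rfl⟩
      exact hi (deg_mem h𝓕 (hBbne i))
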